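/- arXiv:2106.05710 — 4 statements merged into one kernel-verified Lean document; each statement's English description precedes it below -/
import Mathlib

section
/- Let a_1,...,a_N be positive reals with a_i ≤ 1/4 for all i, and D = -(1/Σa_j) Ṡ Ṡᵀ + Diag(Ṡ). Then every eigenvalue λ of D satisfies 0 ≤ λ ≤ 1/4. -/
open Matrix Finset

theorem stmt2 (N : ℕ) (hN : 0 < N) (a : Fin N → ℝ) (ha : ∀ i, 0 < a i)
    (ha4 : ∀ i, a i ≤ 1 / 4)
    (D : Matrix (Fin N) (Fin N) ℝ)
    (hD : ∀ i j, D i j = -(a i * a j) / (∑ k, a k) + if i = j then a i else 0) :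
    ∀ (l : ℝ) (u : Fin N → ℝ), u ≠ 0 → D.mulVec u = l • u → 0 ≤ l ∧ l ≤ 1 / 4 := by
  intro l u hu huv
  haveI : Nonempty (Fin N) := Fin.pos_iff_nonempty.mp hN
  set S : ℝ := ∑ k, a k with hS
  have hSpos : 0 < S := Finset.sum_pos (fun i _ => ha i) univ_nonempty
  set T : ℝ := ∑ i, a i * u i with hT
  set Q : ℝ := ∑ i, a i * u i ^ 2 with hQ
  set U : ℝ := ∑ i, u i ^ 2 with hU
  have hUpos : 0 < U := by
    rcases Function.ne_iff.mp hu with ⟨i, hi⟩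
    have h0 : u i ≠ 0 := hi
    have : 0 < u i ^ 2 := by positivity
    exact lt_of_lt_of_le this (Finset.single_le_sum (fun j _ => sq_nonneg (u j)) (mem_univ i))
  have expand : ∀ i, u i * (D.mulVec u) i
      = (∑ j, -((a i * u i) * (a j * u j)) / S) + a i * u i ^ 2 := by
    intro i
    simp only [Matrix.mulVec, dotProduct, hD]
    rw [Finset.mul_sum]
    calc ∑ j, u i * ((-(a i * a j) / S + if i = j then a i else 0) * u j)
        = ∑ j, (-((a i * u i) * (a j * u j)) / S
            + (if i = j then a i else 0) * (u i * u j)) := by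
          apply Finset.sum_congr rfl; intro j _; ring
      _ = (∑ j, -((a i * u i) * (a j * u j)) / S)
            + ∑ j, (if i = j then a i else 0) * (u i * u j) := by
          rw [Finset.sum_add_distrib]
      _ = (∑ j, -((a i * u i) * (a j * u j)) / S) + a i * u i ^ 2 := by
          congr 1
          simp only [ite_mul, zero_mul, Finset.sum_ite_eq, mem_univ, if_true]
          ring
  have hkey : l * U = Q - T ^ 2 / S := by
    have h1 : ∑ i, u i * (D.mulVec u) i = -(T * T) / S + Q := by
      rw [Finset.sum_congr rfl (fun i _ => expand i), Finset.sum_add_distrib]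
      congr 1
      simp only [neg_div, Finset.sum_neg_distrib, ← Finset.sum_div,
        ← Finset.sum_mul_sum]
      rfl
    have h2 : ∑ i, u i * (D.mulVec u) i = l * U := by
      rw [huv]
      simp only [Pi.smul_apply, smul_eq_mul, hU, Finset.mul_sum]
      apply Finset.sum_congr rfl; intro j _; ring
    rw [← h2, h1]; ring
  have hCS : T ^ 2 ≤ S * Q := by
    have h := Finset.sum_mul_sq_le_sq_mul_sq univ (fun i => Real.sqrt (a i))
      (fun i => Real.sqrt (a i) * u i)
    have e1 : ∀ i, Real.sqrt (a i) * (Real.sqrt (a i) * u i) = a i * u i := by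
      intro i
      rw [← mul_assoc, Real.mul_self_sqrt (ha i).le]
    have e2 : ∀ i, Real.sqrt (a i) ^ 2 = a i := fun i => Real.sq_sqrt (ha i).le
    have e3 : ∀ i, (Real.sqrt (a i) * u i) ^ 2 = a i * u i ^ 2 := by
      intro i; rw [mul_pow, e2]
    simpa [e1, e2, e3, hT, hS, hQ, sq] using h
  have hQle : Q ≤ 1 / 4 * U := by
    have h : ∀ i, a i * u i ^ 2 ≤ 1 / 4 * u i ^ 2 := fun i =>
      mul_le_mul_of_nonneg_right (ha4 i) (sq_nonneg _)
    calc Q ≤ ∑ i, 1 / 4 * u i ^ 2 := Finset.sum_le_sum (fun i _ => h i)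
      _ = 1 / 4 * U := by rw [← Finset.mul_sum]
  have hQT : T ^ 2 / S ≤ Q := by
    rw [div_le_iff₀ hSpos]
    nlinarith [hCS]
  constructor
  · have h : 0 ≤ l * U := by rw [hkey]; linarith
    rw [mul_comm] at h
    exact nonneg_of_mul_nonneg_right h hUpos
  · have h : l * U ≤ 1 / 4 * U := by
      rw [hkey]
      have : 0 ≤ T ^ 2 / S := div_nonneg (sq_nonneg _) hSpos.le
      linarith
    exact le_of_mul_le_mul_right h hUpos
end

section
/- Let k : ℝ^d → ℝ be a continuous radial kernel with k(0) = 1, ω a random vector in ℝ^d with symmetric distribution ℚ satisfying k(r) = E[e^{i ω·r}], and b an independent real random variable with symmetric distribution. Define φ(p) = √2 sin(ω·p + π/4 + b). Then E[φ(p) φ(p')] = k(p − p') for all p, p' ∈ ℝ^d. -/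
open MeasureTheory Finset

theorem stmt9 {Ω : Type*} [MeasurableSpace Ω] (P : Measure Ω) [IsProbabilityMeasure P]
    (d : ℕ) (w : Ω → Fin d → ℝ) (b : Ω → ℝ) (k : (Fin d → ℝ) → ℝ)
    (hkc : Continuous k) (hk0 : k 0 = 1)
    (hrad : ∀ r r' : Fin d → ℝ, ∑ i, r i ^ 2 = ∑ i, r' i ^ 2 → k r = k r')
    (hw : Measurable w) (hb : Measurable b)
    (hindep : ProbabilityTheory.IndepFun w b P)
    (hwsym : Measure.map w P = Measure.map (fun a => -w a) P)
    (hbsym : Measure.map b P = Measure.map (fun a => -b a) P)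
    (hbochner : ∀ r : Fin d → ℝ,
      (k r : ℂ) = ∫ a, Complex.exp (Complex.I * ((∑ i, w a i * r i : ℝ) : ℂ)) ∂P) :
    ∀ p p' : Fin d → ℝ,
      (∫ a, (Real.sqrt 2 * Real.sin ((∑ i, w a i * p i) + Real.pi / 4 + b a)) *
            (Real.sqrt 2 * Real.sin ((∑ i, w a i * p' i) + Real.pi / 4 + b a)) ∂P)
        = k (p - p') := by
  intro p p'
  have h2 : Real.sqrt 2 * Real.sqrt 2 = 2 := Real.mul_self_sqrt (by norm_num)
  have prod2 : ∀ u v : ℝ, (Real.sqrt 2 * Real.sin u) * (Real.sqrt 2 * Real.sin v)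
      = Real.cos (u - v) - Real.cos (u + v) := by
    intro u v
    rw [Real.cos_sub, Real.cos_add]
    linear_combination Real.sin u * Real.sin v * h2
  have key : ∀ x y c : ℝ,
      (Real.sqrt 2 * Real.sin (x + Real.pi / 4 + c)) *
        (Real.sqrt 2 * Real.sin (y + Real.pi / 4 + c))
      = Real.cos (x - y) + Real.sin (x + y + 2 * c) := by
    intro x y c
    rw [prod2]
    have e1 : (x + Real.pi / 4 + c) - (y + Real.pi / 4 + c) = x - y := by ring
    have e2 : (x + Real.pi / 4 + c) + (y + Real.pi / 4 + c) = (x + y + 2 * c) + Real.pi / 2 := by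
      ring
    rw [e1, e2, Real.cos_add_pi_div_two]
    ring
  have hA : Measurable (fun a => ∑ i, w a i * p i) :=
    Finset.measurable_sum _ fun i _ => ((measurable_pi_apply i).comp hw).mul_const _
  have hB : Measurable (fun a => ∑ i, w a i * p' i) :=
    Finset.measurable_sum _ fun i _ => ((measurable_pi_apply i).comp hw).mul_const _
  have I1 : Integrable (fun a => Real.cos ((∑ i, w a i * p i) - ∑ i, w a i * p' i)) P := by
    apply Integrable.mono' (integrable_const (1 : ℝ)) ((hA.sub hB).cos.aestronglyMeasurable)
    filter_upwards with a
    exact (Real.abs_cos_le_one _)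
  have I2 : Integrable (fun a => Real.sin ((∑ i, w a i * p i) + (∑ i, w a i * p' i) + 2 * b a)) P := by
    apply Integrable.mono' (integrable_const (1 : ℝ))
      (((hA.add hB).add (hb.const_mul 2)).sin.aestronglyMeasurable)
    filter_upwards with a
    exact (Real.abs_sin_le_one _)
  simp_rw [key]
  rw [integral_add I1 I2]
  -- Part 1: the cosine integral equals k (p - p')
  have harg : ∀ a, (∑ i, w a i * (p - p') i) = (∑ i, w a i * p i) - ∑ i, w a i * p' i := by
    intro a
    simp [Pi.sub_apply, mul_sub, Finset.sum_sub_distrib]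
  have hb1 := hbochner (p - p')
  simp only [harg] at hb1
  have hintC : Integrable
      (fun a => Complex.exp (Complex.I *
        (((∑ i, w a i * p i) - ∑ i, w a i * p' i : ℝ) : ℂ))) P := by
    apply Integrable.mono' (integrable_const (1 : ℝ))
      ((Complex.measurable_exp.comp
        ((Complex.measurable_ofReal.comp (hA.sub hB)).const_mul Complex.I)).aestronglyMeasurable)
    filter_upwards with a
    simp only [Function.comp_apply]
    rw [Complex.norm_exp]
    simp
  have h1 : (∫ a, Real.cos ((∑ i, w a i * p i) - ∑ i, w a i * p' i) ∂P) = k (p - p') := by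
    have hre := congrArg Complex.re hb1
    rw [Complex.ofReal_re] at hre
    rw [hre, ← RCLike.re_to_complex, ← integral_re hintC]
    congr 1
    funext a
    rw [RCLike.re_to_complex, mul_comm]
    exact (Complex.exp_ofReal_mul_I_re _).symm
  -- Part 2: the sine integral is zero
  have hpair : Measurable (fun a => (w a, b a)) := hw.prodMk hb
  have hnpair : Measurable (fun a => (-w a, -b a)) := hw.neg.prodMk hb.neg
  have hmap : Measure.map (fun a => (w a, b a)) P = Measure.map (fun a => (-w a, -b a)) P := by
    have hneg : ProbabilityTheory.IndepFun (fun a => -w a) (fun a => -b a) P :=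
      hindep.comp measurable_neg measurable_neg
    rw [(ProbabilityTheory.indepFun_iff_map_prod_eq_prod_map_map hw.aemeasurable
        hb.aemeasurable).mp hindep,
      (ProbabilityTheory.indepFun_iff_map_prod_eq_prod_map_map (f := fun a => -w a) (g := fun a => -b a) hw.neg.aemeasurable
        hb.neg.aemeasurable).mp hneg]
    rw [← hwsym, ← hbsym]
  have hfc : Continuous (fun x : (Fin d → ℝ) × ℝ =>
      Real.sin ((∑ i, x.1 i * p i) + (∑ i, x.1 i * p' i) + 2 * x.2)) := by
    apply Real.continuous_sin.comp
    apply Continuous.add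
    apply Continuous.add
    · exact continuous_finset_sum _ fun i _ => ((continuous_apply i).comp continuous_fst).mul
        continuous_const
    · exact continuous_finset_sum _ fun i _ => ((continuous_apply i).comp continuous_fst).mul
        continuous_const
    · exact continuous_const.mul continuous_snd
  have h2' : (∫ a, Real.sin ((∑ i, w a i * p i) + (∑ i, w a i * p' i) + 2 * b a) ∂P) = 0 := by
    have e1 : (∫ a, Real.sin ((∑ i, w a i * p i) + (∑ i, w a i * p' i) + 2 * b a) ∂P)
        = ∫ x, (fun x : (Fin d → ℝ) × ℝ =>
            Real.sin ((∑ i, x.1 i * p i) + (∑ i, x.1 i * p' i) + 2 * x.2)) x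
            ∂(Measure.map (fun a => (w a, b a)) P) :=
      (integral_map hpair.aemeasurable hfc.aestronglyMeasurable).symm
    have eneg : ∀ a : Ω,
        Real.sin ((∑ i, (-w a) i * p i) + (∑ i, (-w a) i * p' i) + 2 * (-b a))
        = - Real.sin ((∑ i, w a i * p i) + (∑ i, w a i * p' i) + 2 * b a) := by
      intro a
      rw [← Real.sin_neg]
      congr 1
      simp only [Pi.neg_apply, neg_mul, Finset.sum_neg_distrib]
      ring
    have chain : (∫ a, Real.sin ((∑ i, w a i * p i) + (∑ i, w a i * p' i) + 2 * b a) ∂P)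
        = - (∫ a, Real.sin ((∑ i, w a i * p i) + (∑ i, w a i * p' i) + 2 * b a) ∂P) := by
      conv_lhs => rw [e1, hmap]
      rw [integral_map hnpair.aemeasurable hfc.aestronglyMeasurable]
      simp only [eneg]
      rw [integral_neg]
    linarith [chain]
  rw [h1, h2', add_zero]
end

section
/- Let w ∈ ℝ^d be a Gaussian random vector with law N(0, (1/ℓ²) I_d) and b = 0. Define φ(p) = √2 sin(w·p + π/4). Then E[φ(p) φ(p')] = exp(−‖p − p'‖₂²/(2ℓ²)) for all p, p' ∈ ℝ^d. -/
open MeasureTheory Finset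

open ProbabilityTheory Complex Real
open scoped NNReal ENNReal

lemma cf_gaussian (v : ℝ≥0) (hv : v ≠ 0) (t : ℝ) :
    ∫ x : ℝ, Complex.exp ((x * t : ℝ) * Complex.I) ∂(gaussianReal 0 v) =
      (Real.exp (-(v * t ^ 2) / 2) : ℝ) := by
  have hv' : (0:ℝ) < v := lt_of_le_of_ne (v.coe_nonneg) (by exact_mod_cast hv.symm)
  rw [gaussianReal_of_var_ne_zero _ hv]
  rw [gaussianPDF_def]
  have hmeas : Measurable fun x : ℝ => (gaussianPDFReal 0 v x).toNNReal :=
    (measurable_gaussianPDFReal 0 v).real_toNNReal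
  have hwd : (fun x : ℝ => ENNReal.ofReal (gaussianPDFReal 0 v x)) =
      fun x : ℝ => ((gaussianPDFReal 0 v x).toNNReal : ENNReal) := rfl
  rw [hwd, integral_withDensity_eq_integral_smul hmeas]
  have hsmul : ∀ x : ℝ, ((gaussianPDFReal 0 v x).toNNReal : ℝ≥0) •
      Complex.exp ((x * t : ℝ) * Complex.I)
      = ((Real.sqrt (2 * π * v))⁻¹ : ℂ) *
        Complex.exp ((-(1 / (2 * v)) : ℂ) * x ^ 2 + (t * Complex.I) * x + 0) := by
    intro x
    rw [NNReal.smul_def, Real.coe_toNNReal _ (gaussianPDFReal_nonneg 0 v x)]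
    rw [gaussianPDFReal_def]
    simp only [sub_zero]
    rw [real_smul]
    push_cast
    rw [mul_assoc, ← Complex.exp_add]
    have hvC : ((v:ℝ):ℂ) ≠ 0 := by exact_mod_cast hv'.ne'
    congr 2
    field_simp
    ring
  simp_rw [hsmul]
  rw [integral_const_mul, integral_cexp_quadratic (by
      simp only [neg_re, Complex.ofReal_re]
      norm_num
      positivity) (t * Complex.I) 0]
  have hvC : ((v:ℝ):ℂ) ≠ 0 := by exact_mod_cast hv'.ne'
  have h1 : ((π:ℂ) / -(-(1 / (2 * ((v:ℝ):ℂ))))) ^ (1/2 : ℂ) = (Real.sqrt (2 * π * (v:ℝ)) : ℂ) := by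
    have he : ((π:ℂ) / -(-(1 / (2 * ((v:ℝ):ℂ))))) = ((2 * π * (v:ℝ) : ℝ) : ℂ) := by
      push_cast
      field_simp
    rw [he, Real.sqrt_eq_rpow, Complex.ofReal_cpow (by positivity)]
    norm_num
  have h2 : (0 : ℂ) - ((t:ℂ) * Complex.I)^2 / (4 * -(1/(2 * ((v:ℝ):ℂ)))) = ((-((v:ℝ) * t^2)/2 : ℝ) : ℂ) := by
    push_cast
    rw [mul_pow, Complex.I_sq]
    field_simp
    ring
  rw [h1, h2, ← Complex.ofReal_exp]
  rw [← mul_assoc, ← Complex.ofReal_inv, ← Complex.ofReal_mul,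
    inv_mul_cancel₀ (by positivity : Real.sqrt (2 * π * (v:ℝ)) ≠ 0)]
  simp

lemma cf_pi (d : ℕ) (v : ℝ≥0) (hv : v ≠ 0) (u : Fin d → ℝ) :
    ∫ x : Fin d → ℝ, Complex.exp (((∑ i, x i * u i : ℝ)) * Complex.I)
      ∂(Measure.pi fun _ : Fin d => gaussianReal 0 v)
    = (Real.exp (-((v:ℝ) * ∑ i, u i ^ 2) / 2) : ℝ) := by
  letI : MeasureSpace ℝ := ⟨gaussianReal 0 v⟩
  have hsig : SigmaFinite (volume : Measure ℝ) := by
    change SigmaFinite (gaussianReal 0 v)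
    infer_instance
  have key := MeasureTheory.integral_fintype_prod_eq_prod (𝕜 := ℂ) (ι := Fin d)
    (fun i x => Complex.exp ((x * u i : ℝ) * Complex.I)) (μ := fun _ => volume)
  have heq : ∀ x : Fin d → ℝ,
      Complex.exp (((∑ i, x i * u i : ℝ)) * Complex.I)
        = ∏ i, Complex.exp ((x i * u i : ℝ) * Complex.I) := by
    intro x
    rw [← Complex.exp_sum]
    congr 1
    push_cast
    rw [Finset.sum_mul]
  calc ∫ x : Fin d → ℝ, Complex.exp (((∑ i, x i * u i : ℝ)) * Complex.I)
        ∂(Measure.pi fun _ : Fin d => gaussianReal 0 v)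
      = ∫ x : Fin d → ℝ, ∏ i, Complex.exp ((x i * u i : ℝ) * Complex.I) := by
        simp_rw [heq]; rfl
    _ = ∏ i, ∫ x : ℝ, Complex.exp ((x * u i : ℝ) * Complex.I) := key
    _ = ∏ i, ((Real.exp (-((v:ℝ) * u i ^ 2) / 2) : ℝ) : ℂ) := by
        refine Finset.prod_congr rfl fun i _ => ?_
        exact cf_gaussian v hv (u i)
    _ = ((Real.exp (-((v:ℝ) * ∑ i, u i ^ 2) / 2) : ℝ) : ℂ) := by
        rw [← Complex.ofReal_prod, ← Real.exp_sum]
        congr 2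
        rw [Finset.mul_sum, ← Finset.sum_neg_distrib, Finset.sum_div]

theorem stmt10 {Ω : Type*} [MeasurableSpace Ω] (P : Measure Ω) [IsProbabilityMeasure P]
    (d : ℕ) (ℓ : ℝ) (hℓ : 0 < ℓ)
    (w : Ω → Fin d → ℝ) (hw : Measurable w)
    (hlaw : Measure.map w P
      = Measure.pi (fun _ : Fin d => ProbabilityTheory.gaussianReal 0 (Real.toNNReal (1 / ℓ ^ 2)))) :
    ∀ p p' : Fin d → ℝ,
      (∫ a, (Real.sqrt 2 * Real.sin ((∑ i, w a i * p i) + Real.pi / 4)) *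
            (Real.sqrt 2 * Real.sin ((∑ i, w a i * p' i) + Real.pi / 4)) ∂P)
        = Real.exp (-(∑ i, (p i - p' i) ^ 2) / (2 * ℓ ^ 2)) := by
  intro p p'
  set v : ℝ≥0 := Real.toNNReal (1 / ℓ ^ 2) with hvdef
  have hvpos : (0:ℝ) < 1 / ℓ ^ 2 := by positivity
  have hv : v ≠ 0 := by
    simp only [hvdef, ne_eq, Real.toNNReal_eq_zero, not_le]
    exact hvpos
  have hvR : ((v:ℝ)) = 1 / ℓ ^ 2 := Real.coe_toNNReal _ hvpos.le
  set u : Fin d → ℝ := fun i => p i - p' i with hudef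
  set s : Fin d → ℝ := fun i => p i + p' i with hsdef
  set μ : Measure (Fin d → ℝ) := Measure.pi (fun _ : Fin d => gaussianReal 0 v) with hμdef
  -- trig identity
  have key : ∀ A B : ℝ, (Real.sqrt 2 * Real.sin (A + π / 4)) * (Real.sqrt 2 * Real.sin (B + π / 4))
      = Real.cos (A - B) + Real.sin (A + B) := by
    intro A B
    have h2 : Real.sqrt 2 * Real.sqrt 2 = 2 := Real.mul_self_sqrt (by norm_num)
    have hxy : ∀ x y : ℝ, Real.cos (x - y) - Real.cos (x + y) = 2 * (Real.sin x * Real.sin y) := by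
      intro x y
      rw [Real.cos_sub, Real.cos_add]; ring
    have e1 : (Real.sqrt 2 * Real.sin (A + π / 4)) * (Real.sqrt 2 * Real.sin (B + π / 4))
        = 2 * (Real.sin (A + π / 4) * Real.sin (B + π / 4)) := by
      rw [mul_mul_mul_comm, h2]
    rw [e1, ← hxy,
      show (A + π / 4) - (B + π / 4) = A - B from by ring,
      show (A + π / 4) + (B + π / 4) = (A + B) + π / 2 from by ring,
      Real.cos_add_pi_div_two]
    ring
  have hpt : ∀ x : Fin d → ℝ,
      (Real.sqrt 2 * Real.sin ((∑ i, x i * p i) + π / 4)) *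
        (Real.sqrt 2 * Real.sin ((∑ i, x i * p' i) + π / 4))
      = Real.cos (∑ i, x i * u i) + Real.sin (∑ i, x i * s i) := by
    intro x
    have hA : ∑ i, x i * u i = (∑ i, x i * p i) - (∑ i, x i * p' i) := by
      simp [hudef, mul_sub, Finset.sum_sub_distrib]
    have hS : ∑ i, x i * s i = (∑ i, x i * p i) + (∑ i, x i * p' i) := by
      simp [hsdef, mul_add, Finset.sum_add_distrib]
    rw [hA, hS]
    exact key _ _
  -- measurability of coordinate sums
  have hmsum : ∀ c : Fin d → ℝ, Measurable fun x : Fin d → ℝ => ∑ i, x i * c i := by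
    intro c
    exact Finset.measurable_sum _ fun i _ => (measurable_pi_apply i).mul_const _
  -- push to the law
  have hmap : (∫ a, (Real.sqrt 2 * Real.sin ((∑ i, w a i * p i) + π / 4)) *
        (Real.sqrt 2 * Real.sin ((∑ i, w a i * p' i) + π / 4)) ∂P)
      = ∫ x, (Real.cos (∑ i, x i * u i) + Real.sin (∑ i, x i * s i)) ∂μ := by
    have hF : Measurable fun x : Fin d → ℝ =>
        Real.cos (∑ i, x i * u i) + Real.sin (∑ i, x i * s i) :=
      ((Real.measurable_cos.comp (hmsum u)).add (Real.measurable_sin.comp (hmsum s)))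
    rw [show μ = Measure.map w P by rw [hlaw, hμdef, hvdef],
      integral_map hw.aemeasurable hF.aestronglyMeasurable]
    exact integral_congr_ae (Filter.Eventually.of_forall fun a => hpt (w a))
  rw [hmap]
  haveI : IsProbabilityMeasure μ := by rw [hμdef]; infer_instance
  -- integrability
  have hbound : ∀ (g : ℝ → ℝ), Measurable g → (∀ y, |g y| ≤ 1) →
      ∀ c : Fin d → ℝ, Integrable (fun x : Fin d → ℝ => g (∑ i, x i * c i)) μ := by
    intro g hg hgb c
    refine Integrable.mono' (integrable_const 1) ((hg.comp (hmsum c)).aestronglyMeasurable) ?_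
    exact Filter.Eventually.of_forall fun x => by simpa using hgb _
  have hintcos := hbound Real.cos Real.measurable_cos (fun y => Real.abs_cos_le_one y) u
  have hintsin := hbound Real.sin Real.measurable_sin (fun y => Real.abs_sin_le_one y) s
  rw [integral_add hintcos hintsin]
  -- complex exponential integrability
  have hintexp : ∀ c : Fin d → ℝ,
      Integrable (fun x : Fin d → ℝ => Complex.exp (((∑ i, x i * c i : ℝ)) * Complex.I)) μ := by
    intro c
    refine Integrable.mono' (integrable_const 1)
      ((Complex.measurable_exp.comp ((Complex.measurable_ofReal.comp (hmsum c)).mul_const _)).aestronglyMeasurable) ?_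
    exact Filter.Eventually.of_forall fun x => by
      simp [Complex.norm_exp]
  have hcos : (∫ x, Real.cos (∑ i, x i * u i) ∂μ)
      = Real.exp (-((v:ℝ) * ∑ i, u i ^ 2) / 2) := by
    have := cf_pi d v hv u
    calc (∫ x, Real.cos (∑ i, x i * u i) ∂μ)
        = ∫ x, (Complex.exp (((∑ i, x i * u i : ℝ)) * Complex.I)).re ∂μ := by
          refine integral_congr_ae (Filter.Eventually.of_forall fun x => ?_)
          exact (Complex.exp_ofReal_mul_I_re _).symm
      _ = (∫ x, Complex.exp (((∑ i, x i * u i : ℝ)) * Complex.I) ∂μ).re := by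
          simpa using integral_re (hintexp u)
      _ = Real.exp (-((v:ℝ) * ∑ i, u i ^ 2) / 2) := by rw [this, Complex.ofReal_re]
  have hsin : (∫ x, Real.sin (∑ i, x i * s i) ∂μ) = 0 := by
    have := cf_pi d v hv s
    calc (∫ x, Real.sin (∑ i, x i * s i) ∂μ)
        = ∫ x, (Complex.exp (((∑ i, x i * s i : ℝ)) * Complex.I)).im ∂μ := by
          refine integral_congr_ae (Filter.Eventually.of_forall fun x => ?_)
          exact (Complex.exp_ofReal_mul_I_im _).symm
      _ = (∫ x, Complex.exp (((∑ i, x i * s i : ℝ)) * Complex.I) ∂μ).im := by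
          simpa using integral_im (hintexp s)
      _ = 0 := by rw [this, Complex.ofReal_im]
  rw [hcos, hsin, add_zero, hvR]
  congr 1
  have hl2 : ℓ ^ 2 ≠ 0 := by positivity
  field_simp
  rfl
end

section
/- Let X, Y be jointly Gaussian real random variables with mean 0, Var(X) = Var(Y) = v, and let μ(a) = λ sin(ω a + π/4). Then E[μ(X)μ(Y)] = (λ²/2) exp(−(ω²/2) Var(X − Y)). -/
open MeasureTheory ProbabilityTheory Real Complex NNReal ENNReal


lemma gauss_fourier_real (b : ℝ) (hb : 0 < b) (t : ℝ) :
    (∫ x : ℝ, Real.cos (t * x) * Real.exp (-b * x ^ 2)) =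
      Real.sqrt (π / b) * Real.exp (-t ^ 2 / (4 * b)) ∧
    (∫ x : ℝ, Real.sin (t * x) * Real.exp (-b * x ^ 2)) = 0 := by
  have hbc : (0:ℝ) < ((b : ℂ)).re := by simpa using hb
  have h := fourierIntegral_gaussian hbc (t : ℂ)
  have hfi : ∀ x : ℝ, Complex.exp (I * t * x) * Complex.exp (-(b:ℂ) * x ^ 2)
      = ((Real.cos (t * x) * Real.exp (-b * x ^ 2) : ℝ) : ℂ)
        + ((Real.sin (t * x) * Real.exp (-b * x ^ 2) : ℝ) : ℂ) * I := by
    intro x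
    have h1 : I * (t:ℂ) * (x:ℂ) = ((t * x : ℝ) : ℂ) * I := by push_cast; ring
    rw [h1, Complex.exp_mul_I]
    have h2 : (-(b:ℂ) * (x:ℂ) ^ 2) = ((-b * x ^ 2 : ℝ) : ℂ) := by push_cast; ring
    rw [h2, ← Complex.ofReal_exp, ← Complex.ofReal_cos, ← Complex.ofReal_sin]
    push_cast
    ring
  have hInt : Integrable (fun x : ℝ => Complex.exp (I * t * x) * Complex.exp (-(b:ℂ) * x ^ 2)) := by
    apply Integrable.mono' (integrable_exp_neg_mul_sq hb)
    · apply Continuous.aestronglyMeasurable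
      fun_prop
    · filter_upwards with x
      rw [norm_mul]
      have e1 : ‖Complex.exp (I * t * x)‖ = 1 := by
        have : I * (t:ℂ) * (x:ℂ) = ((t * x : ℝ) : ℂ) * I := by push_cast; ring
        rw [this]
        simp [Complex.norm_exp]
      have e2 : ‖Complex.exp (-(b:ℂ) * x ^ 2)‖ = Real.exp (-b * x ^ 2) := by
        have : (-(b:ℂ) * (x:ℂ) ^ 2) = ((-b * x ^ 2 : ℝ) : ℂ) := by push_cast; ring
        rw [Complex.norm_exp]
        congr 1
        simp [← Complex.ofReal_pow]
      rw [e1, e2, one_mul]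
  have hrhs : ((π:ℂ) / (b:ℂ)) ^ (1 / 2 : ℂ) * Complex.exp (-(t:ℂ) ^ 2 / (4 * (b:ℂ)))
      = ((Real.sqrt (π / b) * Real.exp (-t ^ 2 / (4 * b)) : ℝ) : ℂ) := by
    have h1 : ((π:ℂ) / (b:ℂ)) = ((π / b : ℝ) : ℂ) := by push_cast; ring
    have h2 : (1 / 2 : ℂ) = ((1 / 2 : ℝ) : ℂ) := by push_cast; ring
    rw [h1, h2, ← Complex.ofReal_cpow (by positivity) (1/2 : ℝ)]
    have h3 : (-(t:ℂ) ^ 2 / (4 * (b:ℂ))) = ((-t ^ 2 / (4 * b) : ℝ) : ℂ) := by push_cast; ring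
    rw [h3, ← Complex.ofReal_exp, ← Complex.ofReal_mul]
    rw [show Real.sqrt (π / b) = (π / b) ^ (1/2 : ℝ) from Real.sqrt_eq_rpow _]
  rw [hrhs] at h
  have hre := integral_re (𝕜 := ℂ) hInt
  have him := integral_im (𝕜 := ℂ) hInt
  simp only [RCLike.re_to_complex, RCLike.im_to_complex] at hre him
  rw [h] at hre him
  simp only [Complex.ofReal_re, Complex.ofReal_im] at hre him
  constructor
  · rw [← hre]
    apply integral_congr_ae
    filter_upwards with x
    rw [hfi x]
    simp only [Complex.add_re, Complex.ofReal_re, Complex.mul_re, Complex.I_re, Complex.I_im,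
      Complex.ofReal_im, mul_zero, mul_one, zero_sub, sub_zero, zero_mul, add_zero]
  · rw [← him]
    apply integral_congr_ae
    filter_upwards with x
    rw [hfi x]
    simp only [Complex.add_im, Complex.ofReal_re, Complex.mul_im, Complex.I_re, Complex.I_im,
      Complex.ofReal_im, mul_zero, mul_one, zero_add, add_zero, zero_mul]


lemma gauss_mean_zero (b : ℝ) : (∫ x : ℝ, x * Real.exp (-b * x ^ 2)) = 0 := by
  have h := MeasureTheory.integral_neg_eq_self (fun x : ℝ => x * Real.exp (-b * x ^ 2)) volume
  simp only [neg_mul, neg_sq] at h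
  rw [integral_neg] at h
  simp only [neg_mul]
  linarith

lemma gauss_sq_moment (b : ℝ) (hb : 0 < b) :
    (∫ x : ℝ, x ^ 2 * Real.exp (-b * x ^ 2)) = Real.sqrt (π / b) / (2 * b) := by
  have hu : ∀ x : ℝ, HasDerivAt (fun y : ℝ => y) 1 x := fun x => hasDerivAt_id x
  have hv : ∀ x : ℝ, HasDerivAt (fun y : ℝ => -Real.exp (-b * y ^ 2) / (2 * b))
      (x * Real.exp (-b * x ^ 2)) x := by
    intro x
    have h1 : HasDerivAt (fun y : ℝ => -b * y ^ 2) (-b * (2 * x)) x := by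
      simpa using ((hasDerivAt_pow 2 x).const_mul (-b))
    have h2 := (h1.exp).neg.div_const (2 * b)
    refine h2.congr_deriv ?_
    rw [_root_.div_eq_iff (by positivity)]
    ring
  have hiv : Integrable (fun x : ℝ => x * Real.exp (-b * x ^ 2)) := integrable_mul_exp_neg_mul_sq hb
  have hsq : Integrable (fun x : ℝ => x ^ 2 * Real.exp (-b * x ^ 2)) := by
    have := integrable_rpow_mul_exp_neg_mul_sq hb (by norm_num : (-1:ℝ) < 2)
    refine this.congr (by filter_upwards with x; rw [show ((2:ℝ) = ((2:ℕ):ℝ)) by norm_num, Real.rpow_natCast])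
  have hsq' : Integrable (fun x : ℝ => x * (x * Real.exp (-b * x ^ 2))) :=
    hsq.congr (Filter.Eventually.of_forall fun x => by ring)
  have key := integral_mul_deriv_eq_deriv_mul_of_integrable (fun x _ => hu x) (fun x _ => hv x)
    (by simpa [Pi.mul_def] using hsq')
    (by
      have : Integrable (fun x : ℝ => -Real.exp (-b * x ^ 2) / (2 * b)) :=
        ((integrable_exp_neg_mul_sq hb).neg).div_const _
      simpa [Pi.mul_def] using this)
    (by
      have h3 : Integrable (fun x : ℝ => x * (-Real.exp (-b * x ^ 2) / (2 * b))) :=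
        ((hiv.neg).div_const (2 * b)).congr (Filter.Eventually.of_forall fun x => by
          simp only [Pi.neg_apply]; ring)
      simpa [Pi.mul_def] using h3)
  simp only [Pi.mul_def, one_mul] at key
  rw [show (∫ x : ℝ, x ^ 2 * Real.exp (-b * x ^ 2)) = ∫ x : ℝ, x * (x * Real.exp (-b * x ^ 2)) from by
    congr 1; funext x; ring]
  rw [key]
  have h4 : (∫ x : ℝ, -Real.exp (-b * x ^ 2) / (2 * b)) = -(√(π / b) / (2 * b)) := by
    rw [show (fun x : ℝ => -Real.exp (-b * x ^ 2) / (2 * b))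
        = fun x : ℝ => (-(1/(2*b))) * Real.exp (-b * x ^ 2) from by funext x; ring]
    rw [MeasureTheory.integral_const_mul, integral_gaussian]
    ring
  rw [h4, neg_neg]


lemma integral_gaussianReal_eq {V : ℝ≥0} (hV : V ≠ 0) (f : ℝ → ℝ) :
    ∫ x, f x ∂(gaussianReal 0 V) = ∫ x, gaussianPDFReal 0 V x * f x := by
  rw [gaussianReal_of_var_ne_zero _ hV]
  have hd : (gaussianPDF 0 V) = fun x => ((Real.toNNReal (gaussianPDFReal 0 V x) : ℝ≥0) : ℝ≥0∞) := by
    funext x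
    rfl
  rw [hd, integral_withDensity_eq_integral_smul
    ((measurable_gaussianPDFReal 0 V).real_toNNReal) f]
  congr 1
  funext x
  rw [NNReal.smul_def, smul_eq_mul, Real.coe_toNNReal _ (gaussianPDFReal_nonneg 0 V x)]

lemma integrable_gaussianReal_iff {V : ℝ≥0} (hV : V ≠ 0) (f : ℝ → ℝ) :
    Integrable f (gaussianReal 0 V) ↔
      Integrable (fun x => gaussianPDFReal 0 V x * f x) volume := by
  rw [gaussianReal_of_var_ne_zero _ hV]
  have hd : (gaussianPDF 0 V) = fun x => ((Real.toNNReal (gaussianPDFReal 0 V x) : ℝ≥0) : ℝ≥0∞) := by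
    funext x; rfl
  rw [hd, integrable_withDensity_iff_integrable_smul
    ((measurable_gaussianPDFReal 0 V).real_toNNReal)]
  constructor <;> intro h <;> refine h.congr (Filter.Eventually.of_forall fun x => ?_) <;>
    simp only [NNReal.smul_def, smul_eq_mul, Real.coe_toNNReal _ (gaussianPDFReal_nonneg 0 V x)]

section Moments

variable {V : ℝ≥0}

lemma pdf_eq (hV : V ≠ 0) (x : ℝ) :
    gaussianPDFReal 0 V x = (Real.sqrt (2 * π * V))⁻¹ * Real.exp (-(2 * (V:ℝ))⁻¹ * x ^ 2) := by
  unfold gaussianPDFReal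
  congr 1
  rw [sub_zero]
  have hv : (0:ℝ) < V := NNReal.coe_pos.mpr (pos_iff_ne_zero.mpr hV)
  field_simp

lemma sqrt_piv (hV : V ≠ 0) : Real.sqrt (π / (2 * (V:ℝ))⁻¹) = Real.sqrt (2 * π * V) := by
  congr 1
  have hv : (0:ℝ) < V := NNReal.coe_pos.mpr (pos_iff_ne_zero.mpr hV)
  field_simp

lemma gaussianReal_cos (V : ℝ≥0) (t : ℝ) :
    ∫ x, Real.cos (t * x) ∂(gaussianReal 0 V) = Real.exp (-(t ^ 2 * V) / 2) := by
  by_cases hV : V = 0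
  · subst hV
    rw [gaussianReal_zero_var, integral_dirac]
    simp
  · have hv : (0:ℝ) < V := NNReal.coe_pos.mpr (pos_iff_ne_zero.mpr hV)
    set b : ℝ := (2 * (V:ℝ))⁻¹ with hbdef
    have hb : 0 < b := by positivity
    rw [integral_gaussianReal_eq hV]
    simp_rw [pdf_eq hV]
    rw [show (fun x => (Real.sqrt (2 * π * V))⁻¹ * Real.exp (-b * x ^ 2) * Real.cos (t * x))
        = fun x => (Real.sqrt (2 * π * V))⁻¹ * (Real.cos (t * x) * Real.exp (-b * x ^ 2)) from by
      funext x; ring]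
    rw [MeasureTheory.integral_const_mul, (gauss_fourier_real b hb t).1, sqrt_piv hV]
    rw [← mul_assoc, inv_mul_cancel₀ (by positivity), one_mul]
    congr 1
    rw [hbdef]
    field_simp
    ring

lemma gaussianReal_sin (V : ℝ≥0) (t : ℝ) :
    ∫ x, Real.sin (t * x) ∂(gaussianReal 0 V) = 0 := by
  by_cases hV : V = 0
  · subst hV
    rw [gaussianReal_zero_var, integral_dirac]
    simp
  · set b : ℝ := (2 * (V:ℝ))⁻¹ with hbdef
    have hv : (0:ℝ) < V := NNReal.coe_pos.mpr (pos_iff_ne_zero.mpr hV)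
    have hb : 0 < b := by positivity
    rw [integral_gaussianReal_eq hV]
    simp_rw [pdf_eq hV]
    rw [show (fun x => (Real.sqrt (2 * π * V))⁻¹ * Real.exp (-b * x ^ 2) * Real.sin (t * x))
        = fun x => (Real.sqrt (2 * π * V))⁻¹ * (Real.sin (t * x) * Real.exp (-b * x ^ 2)) from by
      funext x; ring]
    rw [MeasureTheory.integral_const_mul, (gauss_fourier_real b hb t).2, mul_zero]

lemma gaussianReal_mean (V : ℝ≥0) : ∫ x, x ∂(gaussianReal 0 V) = 0 := by
  by_cases hV : V = 0
  · subst hV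
    rw [gaussianReal_zero_var, integral_dirac]
  · set b : ℝ := (2 * (V:ℝ))⁻¹ with hbdef
    have hv : (0:ℝ) < V := NNReal.coe_pos.mpr (pos_iff_ne_zero.mpr hV)
    have hb : 0 < b := by positivity
    rw [integral_gaussianReal_eq hV]
    simp_rw [pdf_eq hV]
    rw [show (fun x => (Real.sqrt (2 * π * V))⁻¹ * Real.exp (-b * x ^ 2) * x)
        = fun x => (Real.sqrt (2 * π * V))⁻¹ * (x * Real.exp (-b * x ^ 2)) from by
      funext x; ring]
    rw [MeasureTheory.integral_const_mul, gauss_mean_zero b, mul_zero]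

lemma gaussianReal_sq (V : ℝ≥0) : ∫ x, x ^ 2 ∂(gaussianReal 0 V) = V := by
  by_cases hV : V = 0
  · subst hV
    rw [gaussianReal_zero_var, integral_dirac]
    simp
  · set b : ℝ := (2 * (V:ℝ))⁻¹ with hbdef
    have hv : (0:ℝ) < V := NNReal.coe_pos.mpr (pos_iff_ne_zero.mpr hV)
    have hb : 0 < b := by positivity
    rw [integral_gaussianReal_eq hV]
    simp_rw [pdf_eq hV]
    rw [show (fun x => (Real.sqrt (2 * π * V))⁻¹ * Real.exp (-b * x ^ 2) * x ^ 2)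
        = fun x => (Real.sqrt (2 * π * V))⁻¹ * (x ^ 2 * Real.exp (-b * x ^ 2)) from by
      funext x; ring]
    rw [MeasureTheory.integral_const_mul, gauss_sq_moment b hb, sqrt_piv hV]
    rw [div_eq_mul_inv, ← mul_assoc, inv_mul_cancel₀ (by positivity), one_mul, hbdef]
    field_simp

lemma gaussianReal_integrable_sq (V : ℝ≥0) :
    Integrable (fun x : ℝ => x ^ 2) (gaussianReal 0 V) := by
  by_cases hV : V = 0
  · subst hV
    rw [gaussianReal_zero_var]
    constructor
    · exact (measurable_id.pow_const 2).aestronglyMeasurable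
    · simp [HasFiniteIntegral, lintegral_dirac]
  · set b : ℝ := (2 * (V:ℝ))⁻¹ with hbdef
    have hv : (0:ℝ) < V := NNReal.coe_pos.mpr (pos_iff_ne_zero.mpr hV)
    have hb : 0 < b := by positivity
    rw [integrable_gaussianReal_iff hV]
    have hsq : Integrable (fun x : ℝ => x ^ 2 * Real.exp (-b * x ^ 2)) := by
      have := integrable_rpow_mul_exp_neg_mul_sq hb (by norm_num : (-1:ℝ) < 2)
      refine this.congr ?_
      filter_upwards with x
      rw [show ((2:ℝ) = ((2:ℕ):ℝ)) by norm_num, Real.rpow_natCast]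
    refine (hsq.const_mul ((Real.sqrt (2 * π * V))⁻¹)).congr ?_
    filter_upwards with x
    rw [pdf_eq hV]
    ring

end Moments

lemma variance_of_gaussian {Ω : Type*} [MeasurableSpace Ω] (P : Measure Ω)
    [IsProbabilityMeasure P] (Z : Ω → ℝ) (hZ : Measurable Z) (V : ℝ≥0)
    (h : Measure.map Z P = gaussianReal 0 V) :
    variance Z P = V := by
  have hmean : ∫ a, Z a ∂P = 0 := by
    have h1 := integral_map (μ := P) (f := fun x : ℝ => x) hZ.aemeasurable
      aestronglyMeasurable_id
    rw [h] at h1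
    rw [← h1, gaussianReal_mean]
  have hsq : ∫ a, Z a ^ 2 ∂P = V := by
    have h1 := integral_map (μ := P) (f := fun x : ℝ => x ^ 2) hZ.aemeasurable
      (measurable_id.pow_const 2).aestronglyMeasurable
    rw [h] at h1
    rw [← h1, gaussianReal_sq]
  have hint : Integrable (fun a => Z a ^ 2) P := by
    have h1 := gaussianReal_integrable_sq V
    rw [← h] at h1
    exact (integrable_map_measure ((measurable_id.pow_const 2).aestronglyMeasurable)
      hZ.aemeasurable).mp h1
  have hL2 : MeasureTheory.MemLp Z 2 P :=
    (memLp_two_iff_integrable_sq hZ.aestronglyMeasurable).2 hint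
  rw [ProbabilityTheory.variance_eq_sub hL2]
  have e1 : P[Z ^ 2] = ∫ a, Z a ^ 2 ∂P := by
    congr 1
  rw [e1, hsq, hmean]
  ring

theorem stmt12 {Ω : Type*} [MeasurableSpace Ω] (P : Measure Ω) [IsProbabilityMeasure P]
    (X Y : Ω → ℝ) (hX : Measurable X) (hY : Measurable Y)
    (v : ℝ≥0) (hvX : variance X P = v) (hvY : variance Y P = v)
    (hmX : ∫ a, X a ∂P = 0) (hmY : ∫ a, Y a ∂P = 0)
    (hgauss : ∀ s t : ℝ, ∃ var : ℝ≥0,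
      Measure.map (fun a => s * X a + t * Y a) P = ProbabilityTheory.gaussianReal 0 var)
    (lam ω : ℝ) :
    ∫ a, (lam * Real.sin (ω * X a + Real.pi / 4)) * (lam * Real.sin (ω * Y a + Real.pi / 4)) ∂P
      = lam ^ 2 / 2 * Real.exp (-(ω ^ 2 / 2) * variance (fun a => X a - Y a) P) := by
  obtain ⟨v1, h1⟩ := hgauss 1 (-1)
  obtain ⟨v2, h2⟩ := hgauss 1 1
  rw [show (fun a => (1:ℝ) * X a + (-1) * Y a) = fun a => X a - Y a from by funext a; ring] at h1
  rw [show (fun a => (1:ℝ) * X a + 1 * Y a) = fun a => X a + Y a from by funext a; ring] at h2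
  have hZ1 : Measurable fun a => X a - Y a := hX.sub hY
  have hZ2 : Measurable fun a => X a + Y a := hX.add hY
  have hvar : variance (fun a => X a - Y a) P = v1 := variance_of_gaussian P _ hZ1 v1 h1
  have key : ∀ a, (lam * Real.sin (ω * X a + Real.pi / 4)) * (lam * Real.sin (ω * Y a + Real.pi / 4))
      = lam ^ 2 / 2 * Real.cos (ω * (X a - Y a)) + lam ^ 2 / 2 * Real.sin (ω * (X a + Y a)) := by
    intro a
    have h2' : Real.sqrt 2 ^ 2 = 2 := Real.sq_sqrt (by norm_num)
    simp only [mul_sub, mul_add, Real.sin_add, Real.cos_sub, Real.sin_pi_div_four,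
      Real.cos_pi_div_four]
    linear_combination (lam ^ 2 * (Real.sin (ω * X a) * Real.sin (ω * Y a)
      + Real.sin (ω * X a) * Real.cos (ω * Y a) + Real.cos (ω * X a) * Real.sin (ω * Y a)
      + Real.cos (ω * X a) * Real.cos (ω * Y a)) / 4) * h2'
  have icos : Integrable (fun a => lam ^ 2 / 2 * Real.cos (ω * (X a - Y a))) P := by
    apply Integrable.const_mul
    apply MeasureTheory.Integrable.mono' (integrable_const (1:ℝ))
    · exact (Real.continuous_cos.measurable.comp (measurable_const.mul hZ1)).aestronglyMeasurable
    · filter_upwards with a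
      rw [Real.norm_eq_abs]
      exact Real.abs_cos_le_one _
  have isin : Integrable (fun a => lam ^ 2 / 2 * Real.sin (ω * (X a + Y a))) P := by
    apply Integrable.const_mul
    apply MeasureTheory.Integrable.mono' (integrable_const (1:ℝ))
    · exact (Real.continuous_sin.measurable.comp (measurable_const.mul hZ2)).aestronglyMeasurable
    · filter_upwards with a
      rw [Real.norm_eq_abs]
      exact Real.abs_sin_le_one _
  rw [integral_congr_ae (Filter.Eventually.of_forall key), integral_add icos isin,
    MeasureTheory.integral_const_mul, MeasureTheory.integral_const_mul]
  have c1 : ∫ a, Real.cos (ω * (X a - Y a)) ∂P = Real.exp (-(ω ^ 2 * v1) / 2) := by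
    have h3 := integral_map (μ := P) (f := fun x : ℝ => Real.cos (ω * x)) hZ1.aemeasurable
      (Real.continuous_cos.comp (continuous_const.mul continuous_id)).measurable.aestronglyMeasurable
    rw [h1] at h3
    rw [← h3, gaussianReal_cos]
  have s1 : ∫ a, Real.sin (ω * (X a + Y a)) ∂P = 0 := by
    have h3 := integral_map (μ := P) (f := fun x : ℝ => Real.sin (ω * x)) hZ2.aemeasurable
      (Real.continuous_sin.comp (continuous_const.mul continuous_id)).measurable.aestronglyMeasurable
    rw [h2] at h3
    rw [← h3, gaussianReal_sin]
  rw [c1, s1, mul_zero, add_zero, hvar]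
  congr 2
  ring
end
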